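/- Define the operator K on bounded measurable functions f : [0,1] → ℝ by Kf(s) := (2/(2β+1))·[∫_s^1 x^{2β}·f(s/x) dx + ∫_0^s (1−x)^{2β}·f((1−s)/(1−x)) dx] + 2·B(β+1, β+1)·h(s)²/(β+1). Then for all bounded measurable f, g : [0,1] → ℝ, we have sup_{s∈[0,1]} |Kf(s) − Kg(s)| ≤ (4/(2β+1)²)·sup_{s∈[0,1]} |f(s) − g(s)|, and moreover 4/(2β+1)² < 1, so K is a strict contraction in the supremum norm on bounded measurable functions on [0,1]. -/

import Mathlib

open MeasureTheory Real Set

/-- The exponent `β = (√17 - 3)/2`, the positive root of `(β+1)(β+2) = 4`. -/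
noncomputable def β : ℝ := (Real.sqrt 17 - 3) / 2

/-- The scaling function `h(s) = (s(1-s))^{β/2}`. -/
noncomputable def h (s : ℝ) : ℝ := (s * (1 - s)) ^ (β / 2)

/-- The Beta function `B(a,b) = ∫₀¹ t^{a-1}(1-t)^{b-1} dt`. -/
noncomputable def Bfun (a b : ℝ) : ℝ := ∫ t in (0:ℝ)..1, t ^ (a - 1) * (1 - t) ^ (b - 1)

/-- The second-moment integral operator `K`. -/
noncomputable def K (f : ℝ → ℝ) (s : ℝ) : ℝ :=
  (2 / (2 * β + 1)) *
      ((∫ x in s..1, x ^ (2 * β) * f (s / x)) +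
        ∫ x in (0:ℝ)..s, (1 - x) ^ (2 * β) * f ((1 - s) / (1 - x)))
    + 2 * Bfun (β + 1) (β + 1) * (h s) ^ 2 / (β + 1)

lemma beta_pos : 0 < β := by
  have h17 : (3:ℝ) < Real.sqrt 17 := by
    nlinarith [Real.sq_sqrt (by norm_num : (17:ℝ) ≥ 0), Real.sqrt_nonneg 17]
  unfold β; linarith

lemma integ_aux {F : ℝ → ℝ} (hF : Measurable F) {a b : ℝ} (M : ℝ) (hab : a ≤ b)
    (hM : ∀ x ∈ Set.Ioc a b, |F x| ≤ M) : IntervalIntegrable F volume a b := by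
  rw [intervalIntegrable_iff_integrableOn_Ioc_of_le hab]
  refine Integrable.mono' (g := fun _ => M)
    (integrableOn_const measure_Ioc_lt_top.ne) hF.aestronglyMeasurable ?_
  filter_upwards [ae_restrict_mem measurableSet_Ioc] with x hx
  simpa using hM x hx

lemma rpow_int_bound {a : ℝ} (ha : 0 ≤ a) : ∫ x in a..1, x ^ (2*β) ≤ 1/(2*β+1) := by
  have hβ := beta_pos
  rw [integral_rpow (Or.inl (by linarith : (-1:ℝ) < 2*β))]
  have h1 : (1:ℝ) ^ (2*β+1) = 1 := Real.one_rpow _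
  have h2 : 0 ≤ a ^ (2*β+1) := Real.rpow_nonneg ha _
  rw [h1]
  have hpos : (0:ℝ) < 2*β+1 := by linarith
  exact div_le_div_of_nonneg_right (by linarith) hpos.le

/-- `K` is a strict contraction (with factor `4/(2β+1)² < 1`) in the supremum norm
on bounded measurable functions on `[0,1]`. -/
theorem K_strict_contraction (f g : ℝ → ℝ) (hf : Measurable f) (hg : Measurable g)
    (hfb : ∃ M, ∀ t ∈ Set.Icc (0 : ℝ) 1, |f t| ≤ M)
    (hgb : ∃ M, ∀ t ∈ Set.Icc (0 : ℝ) 1, |g t| ≤ M) :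
    (∀ s ∈ Set.Icc (0 : ℝ) 1,
        |K f s - K g s| ≤ (4 / (2 * β + 1) ^ 2) * ⨆ t : Set.Icc (0 : ℝ) 1, |f t.1 - g t.1|)
      ∧ 4 / (2 * β + 1) ^ 2 < 1 := by
  obtain ⟨Mf, hMf⟩ := hfb
  obtain ⟨Mg, hMg⟩ := hgb
  have hβ := beta_pos
  have hpos : (0:ℝ) < 2*β+1 := by linarith
  set S := ⨆ t : Set.Icc (0:ℝ) 1, |f t.1 - g t.1| with hSdef
  have hSnn : 0 ≤ S := Real.iSup_nonneg fun t => abs_nonneg _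
  have hbdd : BddAbove (Set.range fun t : Set.Icc (0:ℝ) 1 => |f t.1 - g t.1|) := by
    refine ⟨Mf + Mg, ?_⟩
    rintro _ ⟨t, rfl⟩
    have h1 := hMf t.1 t.2
    have h2 := hMg t.1 t.2
    calc |f t.1 - g t.1| ≤ |f t.1| + |g t.1| := abs_sub _ _
      _ ≤ Mf + Mg := by linarith
  have hS : ∀ t ∈ Set.Icc (0:ℝ) 1, |f t - g t| ≤ S := fun t ht => le_ciSup hbdd ⟨t, ht⟩
  constructor
  · intro s hs
    obtain ⟨hs0, hs1⟩ := hs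
    -- membership facts
    have mem1 : ∀ x ∈ Set.Icc s 1, s / x ∈ Set.Icc (0:ℝ) 1 ∨ x = 0 := by
      intro x hx
      by_cases hx0 : x = 0
      · exact Or.inr hx0
      · left
        have hxpos : 0 < x := lt_of_le_of_ne (le_trans hs0 hx.1) (Ne.symm hx0)
        exact ⟨div_nonneg hs0 hxpos.le, div_le_one_of_le₀ hx.1 hxpos.le⟩
    have mem2 : ∀ x ∈ Set.Icc (0:ℝ) s, (1-s)/(1-x) ∈ Set.Icc (0:ℝ) 1 := by
      intro x hx
      have h1x : 0 ≤ 1 - x := by linarith [hx.2]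
      exact ⟨div_nonneg (by linarith) h1x, div_le_one_of_le₀ (by linarith [hx.2]) h1x⟩
    -- measurability of integrands
    have m1f : Measurable fun x : ℝ => x ^ (2*β) * f (s/x) :=
      (measurable_id.pow_const (2*β) |>.mul (hf.comp (measurable_const.div measurable_id)))
    have m1g : Measurable fun x : ℝ => x ^ (2*β) * g (s/x) :=
      (measurable_id.pow_const (2*β) |>.mul (hg.comp (measurable_const.div measurable_id)))
    have m2f : Measurable fun x : ℝ => (1-x) ^ (2*β) * f ((1-s)/(1-x)) :=
      ((measurable_const.sub measurable_id).pow_const (2*β) |>.mul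
        (hf.comp (measurable_const.div (measurable_const.sub measurable_id))))
    have m2g : Measurable fun x : ℝ => (1-x) ^ (2*β) * g ((1-s)/(1-x)) :=
      ((measurable_const.sub measurable_id).pow_const (2*β) |>.mul
        (hg.comp (measurable_const.div (measurable_const.sub measurable_id))))
    -- generic bound for the first kind of integrand
    have bnd1 : ∀ (φ : ℝ → ℝ) (M : ℝ), (∀ t ∈ Set.Icc (0:ℝ) 1, |φ t| ≤ M) →
        ∀ x ∈ Set.Icc s 1, |x ^ (2*β) * φ (s/x)| ≤ x ^ (2*β) * M := by
      intro φ M hM x hx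
      rcases mem1 x hx with hmem | rfl
      · rw [abs_mul, abs_of_nonneg (Real.rpow_nonneg (le_trans hs0 hx.1) _)]
        exact mul_le_mul_of_nonneg_left (hM _ hmem) (Real.rpow_nonneg (le_trans hs0 hx.1) _)
      · rw [Real.zero_rpow (by positivity)]
        simp
    have bnd2 : ∀ (φ : ℝ → ℝ) (M : ℝ), (∀ t ∈ Set.Icc (0:ℝ) 1, |φ t| ≤ M) →
        ∀ x ∈ Set.Icc (0:ℝ) s, |(1-x) ^ (2*β) * φ ((1-s)/(1-x))| ≤ (1-x) ^ (2*β) * M := by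
      intro φ M hM x hx
      have h1x : 0 ≤ 1 - x := by linarith [hx.2]
      rw [abs_mul, abs_of_nonneg (Real.rpow_nonneg h1x _)]
      exact mul_le_mul_of_nonneg_left (hM _ (mem2 x hx)) (Real.rpow_nonneg h1x _)
    -- rpow ≤ 1 bounds for integrability
    have rb1 : ∀ x ∈ Set.Icc s 1, x ^ (2*β) ≤ 1 := fun x hx =>
      Real.rpow_le_one (le_trans hs0 hx.1) hx.2 (by positivity)
    have rb2 : ∀ x ∈ Set.Icc (0:ℝ) s, (1-x) ^ (2*β) ≤ 1 := fun x hx =>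
      Real.rpow_le_one (by linarith [hx.2]) (by linarith [hx.1]) (by positivity)
    -- integrability
    have Mf0 : 0 ≤ Mf := le_trans (abs_nonneg _) (hMf 0 (by norm_num))
    have Mg0 : 0 ≤ Mg := le_trans (abs_nonneg _) (hMg 0 (by norm_num))
    have I1f : IntervalIntegrable (fun x => x ^ (2*β) * f (s/x)) volume s 1 :=
      integ_aux m1f Mf hs1 fun x hx =>
        (bnd1 f Mf hMf x (Set.Ioc_subset_Icc_self hx)).trans
          (by nlinarith [rb1 x (Set.Ioc_subset_Icc_self hx)])
    have I1g : IntervalIntegrable (fun x => x ^ (2*β) * g (s/x)) volume s 1 :=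
      integ_aux m1g Mg hs1 fun x hx =>
        (bnd1 g Mg hMg x (Set.Ioc_subset_Icc_self hx)).trans
          (by nlinarith [rb1 x (Set.Ioc_subset_Icc_self hx)])
    have I2f : IntervalIntegrable (fun x => (1-x) ^ (2*β) * f ((1-s)/(1-x))) volume 0 s :=
      integ_aux m2f Mf hs0 fun x hx =>
        (bnd2 f Mf hMf x (Set.Ioc_subset_Icc_self hx)).trans
          (by nlinarith [rb2 x (Set.Ioc_subset_Icc_self hx)])
    have I2g : IntervalIntegrable (fun x => (1-x) ^ (2*β) * g ((1-s)/(1-x))) volume 0 s :=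
      integ_aux m2g Mg hs0 fun x hx =>
        (bnd2 g Mg hMg x (Set.Ioc_subset_Icc_self hx)).trans
          (by nlinarith [rb2 x (Set.Ioc_subset_Icc_self hx)])
    -- difference function
    set d : ℝ → ℝ := fun t => f t - g t with hd
    have hdm : Measurable d := hf.sub hg
    have hdbd : ∀ t ∈ Set.Icc (0:ℝ) 1, |d t| ≤ S := hS
    have D1 : IntervalIntegrable (fun x => x ^ (2*β) * d (s/x)) volume s 1 := by
      have : (fun x => x ^ (2*β) * d (s/x))
          = fun x => x ^ (2*β) * f (s/x) - x ^ (2*β) * g (s/x) := by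
        funext x; simp [hd]; ring
      rw [this]; exact I1f.sub I1g
    have D2 : IntervalIntegrable (fun x => (1-x) ^ (2*β) * d ((1-s)/(1-x))) volume 0 s := by
      have : (fun x => (1-x) ^ (2*β) * d ((1-s)/(1-x)))
          = fun x => (1-x) ^ (2*β) * f ((1-s)/(1-x)) - (1-x) ^ (2*β) * g ((1-s)/(1-x)) := by
        funext x; simp [hd]; ring
      rw [this]; exact I2f.sub I2g
    have G1 : IntervalIntegrable (fun x => x ^ (2*β) * S) volume s 1 :=
      integ_aux (F := fun x => x ^ (2*β) * S) (by fun_prop) S hs1 fun x hx => by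
        rw [abs_mul, abs_of_nonneg (Real.rpow_nonneg (le_trans hs0 hx.1.le) _),
          abs_of_nonneg hSnn]
        exact mul_le_mul_of_nonneg_right (rb1 x (Set.Ioc_subset_Icc_self hx)) hSnn |>.trans
          (by linarith)
    have G2 : IntervalIntegrable (fun x => (1-x) ^ (2*β) * S) volume 0 s :=
      integ_aux (F := fun x => (1-x) ^ (2*β) * S) (by fun_prop) S hs0 fun x hx => by
        have h1x : 0 ≤ 1 - x := by linarith [hx.2]
        rw [abs_mul, abs_of_nonneg (Real.rpow_nonneg h1x _), abs_of_nonneg hSnn]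
        exact mul_le_mul_of_nonneg_right (rb2 x (Set.Ioc_subset_Icc_self hx)) hSnn |>.trans
          (by linarith)
    -- key bounds on the two integrals
    have key1 : |∫ x in s..1, x ^ (2*β) * d (s/x)| ≤ (1/(2*β+1)) * S := by
      calc |∫ x in s..1, x ^ (2*β) * d (s/x)|
          ≤ ∫ x in s..1, |x ^ (2*β) * d (s/x)| :=
            intervalIntegral.abs_integral_le_integral_abs hs1
        _ ≤ ∫ x in s..1, x ^ (2*β) * S :=
            intervalIntegral.integral_mono_on hs1 D1.abs G1 (bnd1 d S hdbd)
        _ = (∫ x in s..1, x ^ (2*β)) * S := intervalIntegral.integral_mul_const _ _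
        _ ≤ (1/(2*β+1)) * S := mul_le_mul_of_nonneg_right (rpow_int_bound hs0) hSnn
    have key2 : |∫ x in (0:ℝ)..s, (1-x) ^ (2*β) * d ((1-s)/(1-x))| ≤ (1/(2*β+1)) * S := by
      calc |∫ x in (0:ℝ)..s, (1-x) ^ (2*β) * d ((1-s)/(1-x))|
          ≤ ∫ x in (0:ℝ)..s, |(1-x) ^ (2*β) * d ((1-s)/(1-x))| :=
            intervalIntegral.abs_integral_le_integral_abs hs0
        _ ≤ ∫ x in (0:ℝ)..s, (1-x) ^ (2*β) * S :=
            intervalIntegral.integral_mono_on hs0 D2.abs G2 (bnd2 d S hdbd)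
        _ = ∫ x in (1-s)..(1:ℝ), x ^ (2*β) * S := by
            have := intervalIntegral.integral_comp_sub_left
              (a := (0:ℝ)) (b := s) (fun y => y ^ (2*β) * S) 1
            simpa using this
        _ = (∫ x in (1-s)..(1:ℝ), x ^ (2*β)) * S := intervalIntegral.integral_mul_const _ _
        _ ≤ (1/(2*β+1)) * S :=
            mul_le_mul_of_nonneg_right (rpow_int_bound (by linarith)) hSnn
    -- combine
    have hKdiff : K f s - K g s = (2/(2*β+1)) *
        ((∫ x in s..1, x ^ (2*β) * d (s/x)) +
          ∫ x in (0:ℝ)..s, (1-x) ^ (2*β) * d ((1-s)/(1-x))) := by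
      have e1 : (∫ x in s..1, x ^ (2*β) * d (s/x))
          = (∫ x in s..1, x ^ (2*β) * f (s/x)) - ∫ x in s..1, x ^ (2*β) * g (s/x) := by
        rw [← intervalIntegral.integral_sub I1f I1g]
        congr 1; funext x; simp [hd]; ring
      have e2 : (∫ x in (0:ℝ)..s, (1-x) ^ (2*β) * d ((1-s)/(1-x)))
          = (∫ x in (0:ℝ)..s, (1-x) ^ (2*β) * f ((1-s)/(1-x)))
            - ∫ x in (0:ℝ)..s, (1-x) ^ (2*β) * g ((1-s)/(1-x)) := by
        rw [← intervalIntegral.integral_sub I2f I2g]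
        congr 1; funext x; simp [hd]; ring
      rw [e1, e2]; unfold K; ring
    rw [hKdiff, abs_mul, abs_of_nonneg (by positivity : (0:ℝ) ≤ 2/(2*β+1))]
    calc 2/(2*β+1) * |(∫ x in s..1, x ^ (2*β) * d (s/x)) +
          ∫ x in (0:ℝ)..s, (1-x) ^ (2*β) * d ((1-s)/(1-x))|
        ≤ 2/(2*β+1) * ((1/(2*β+1)) * S + (1/(2*β+1)) * S) := by
          apply mul_le_mul_of_nonneg_left _ (by positivity)
          exact (abs_add_le _ _).trans (add_le_add key1 key2)
      _ = 4 / (2*β+1)^2 * S := by field_simp; ring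
  · have h17 : Real.sqrt 17 < 17/4 := by
      nlinarith [Real.sq_sqrt (by norm_num : (17:ℝ) ≥ 0), Real.sqrt_nonneg 17]
    have hb : 2*β+1 = Real.sqrt 17 - 2 := by unfold β; ring
    rw [div_lt_one (by positivity)]
    nlinarith [Real.sq_sqrt (by norm_num : (17:ℝ) ≥ 0), Real.sqrt_nonneg 17]
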